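/- For any finite graph G, real q ≥ 2 and w ≥ 0, we have Z_G(q,w) ≥ Z^{(2)}_G(q,w), where Z^{(2)}_G(q,w) = Σ_{S⊆V} (1+w)^{e(S)} (q−1)^{v(G)−|S|} (1 + w/(q−1))^{e(V∖S)}. For 1 < q ≤ 2 and w ≥ 0 the reverse inequality Z_G(q,w) ≤ Z^{(2)}_G(q,w) holds. -/

import Mathlib

open Finset

/-- The number of connected components of the spanning subgraph `(V, A)`. -/
noncomputable def numComponents {V : Type*} (A : Finset (Sym2 V)) : ℕ :=
  Nat.card (SimpleGraph.fromEdgeSet (↑A : Set (Sym2 V))).ConnectedComponent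

/-- The partition function of the random cluster model. -/
noncomputable def rcPartition {V : Type*} [Fintype V] [DecidableEq V]
    (G : SimpleGraph V) [DecidableRel G.Adj] (q w : ℝ) : ℝ :=
  ∑ A ∈ G.edgeFinset.powerset, q ^ numComponents A * w ^ A.card

/-- The number of edges of `G` induced by the vertex set `S`. -/
noncomputable def inducedEdgeCount {V : Type*} [Fintype V] [DecidableEq V]
    (G : SimpleGraph V) [DecidableRel G.Adj] (S : Finset V) : ℕ :=
  (G.edgeFinset.filter (fun e => ∀ v ∈ e, v ∈ S)).card

/-- The rank 2 approximation of the random cluster partition function. -/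
noncomputable def rcRank2 {V : Type*} [Fintype V] [DecidableEq V]
    (G : SimpleGraph V) [DecidableRel G.Adj] (q w : ℝ) : ℝ :=
  ∑ S : Finset V, (1 + w) ^ inducedEdgeCount G S * (q - 1) ^ (Fintype.card V - S.card) *
    (1 + w / (q - 1)) ^ inducedEdgeCount G Sᶜ


section AuxRC
open SimpleGraph
set_option linter.unusedSectionVars false
set_option maxHeartbeats 1600000
variable {V : Type*} [Fintype V] [DecidableEq V]


def within (S : Finset V) (e : Sym2 V) : Prop := ∀ v ∈ e, v ∈ S
instance (S : Finset V) : DecidablePred (within S) := fun e => by unfold within; infer_instance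
def compat (S : Finset V) (A : Finset (Sym2 V)) : Prop := ∀ e ∈ A, within S e ∨ within Sᶜ e
instance (S : Finset V) (A : Finset (Sym2 V)) : Decidable (compat S A) := by
  unfold compat; infer_instance
noncomputable def tcount (S : Finset V) (A : Finset (Sym2 V)) : ℕ :=
  Nat.card {c : (SimpleGraph.fromEdgeSet (↑A : Set (Sym2 V))).ConnectedComponent // c.out ∉ S}

lemma sum_pow_powerset {α : Type*} [DecidableEq α] (s : Finset α) (x : ℝ) :
    ∑ t ∈ s.powerset, x ^ t.card = (1 + x) ^ s.card := by
  induction s using Finset.induction with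
  | empty => simp
  | @insert a s h ih =>
    have hinj : ∀ t ∈ s.powerset, ∀ y ∈ s.powerset, insert a t = insert a y → t = y := by
      intro t ht y hy hxy
      have hat : a ∉ t := fun hc => h (Finset.mem_powerset.1 ht hc)
      have hay : a ∉ y := fun hc => h (Finset.mem_powerset.1 hy hc)
      rw [← Finset.erase_insert hat, hxy, Finset.erase_insert hay]
    rw [Finset.powerset_insert, Finset.sum_union, Finset.sum_image hinj,
      Finset.card_insert_of_notMem h, pow_succ]
    · have : ∀ t ∈ s.powerset, x ^ (insert a t).card = x ^ t.card * x := by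
        intro t ht
        have hat : a ∉ t := fun hc => h (Finset.mem_powerset.1 ht hc)
        rw [Finset.card_insert_of_notMem hat, pow_succ]
      rw [Finset.sum_congr rfl this, ← Finset.sum_mul, ih]
      ring
    · rw [Finset.disjoint_right]
      rintro t ht hts
      obtain ⟨u, hu, rfl⟩ := Finset.mem_image.1 ht
      exact h (Finset.mem_powerset.1 hts (Finset.mem_insert_self a u))

lemma adj_fromEdgeSet {A : Finset (Sym2 V)} {u v : V}
    (h : (SimpleGraph.fromEdgeSet (↑A : Set (Sym2 V))).Adj u v) : s(u, v) ∈ A ∧ u ≠ v := by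
  rw [SimpleGraph.fromEdgeSet_adj] at h; exact_mod_cast h

lemma mk_out {G : SimpleGraph V} (c : G.ConnectedComponent) :
    G.connectedComponentMk c.out = c := c.out_eq

lemma reachable_side {S : Finset V} {A : Finset (Sym2 V)} (hc : compat S A) {u v : V}
    (h : (SimpleGraph.fromEdgeSet (↑A : Set (Sym2 V))).Reachable u v) : u ∈ S ↔ v ∈ S := by
  obtain ⟨p⟩ := h
  induction p with
  | nil => rfl
  | @cons x y z ha p ih =>
    obtain ⟨he, -⟩ := adj_fromEdgeSet ha
    rcases hc _ he with hin | hin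
    · have hx : x ∈ S := hin x (Sym2.mem_mk_left x y)
      have hy : y ∈ S := hin y (Sym2.mem_mk_right x y)
      rw [← ih] ; exact ⟨fun _ => hy, fun _ => hx⟩
    · have hx : x ∉ S := by simpa using hin x (Sym2.mem_mk_left x y)
      have hy : y ∉ S := by simpa using hin y (Sym2.mem_mk_right x y)
      rw [← ih]; exact ⟨fun h' => absurd h' hx, fun h' => absurd h' hy⟩

lemma isolated {S : Finset V} {B : Finset (Sym2 V)} (hB : ∀ e ∈ B, within Sᶜ e) {u v : V}
    (hu : u ∈ S) (h : (SimpleGraph.fromEdgeSet (↑B : Set (Sym2 V))).Reachable u v) : u = v := by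
  obtain ⟨p⟩ := h
  cases p with
  | nil => rfl
  | @cons x y z ha p =>
    obtain ⟨he, -⟩ := adj_fromEdgeSet ha
    have := hB _ he u (Sym2.mem_mk_left u y)
    simp at this
    exact absurd hu this

/-- walks from a vertex outside S stay in the Sᶜ-filtered edge set -/
lemma reach_filter {S : Finset V} {A : Finset (Sym2 V)} (hc : compat S A) {u v : V}
    (hu : u ∉ S) (h : (SimpleGraph.fromEdgeSet (↑A : Set (Sym2 V))).Reachable u v) :
    (SimpleGraph.fromEdgeSet (↑(A.filter (within Sᶜ)) : Set (Sym2 V))).Reachable u v := by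
  obtain ⟨p⟩ := h
  induction p with
  | nil => exact Reachable.refl _
  | @cons x y z ha p ih =>
    obtain ⟨he, hne⟩ := adj_fromEdgeSet ha
    have hw : within Sᶜ s(x,y) := by
      rcases hc _ he with hin | hin
      · exact absurd (hin x (Sym2.mem_mk_left x y)) hu
      · exact hin
    have hy : y ∉ S := by simpa using hw y (Sym2.mem_mk_right x y)
    have hadj : (SimpleGraph.fromEdgeSet (↑(A.filter (within Sᶜ)) : Set (Sym2 V))).Adj x y := by
      rw [SimpleGraph.fromEdgeSet_adj]
      exact ⟨by simpa using Finset.mem_filter.2 ⟨he, hw⟩, hne⟩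
    exact Reachable.trans ⟨hadj.toWalk⟩ (ih hy)

/-- splitting the component count when all edges avoid S -/
lemma numComponents_eq_card_add_tcount {S : Finset V} {B : Finset (Sym2 V)}
    (hB : ∀ e ∈ B, within Sᶜ e) : numComponents B = S.card + tcount S B := by
  set G0 := SimpleGraph.fromEdgeSet (↑B : Set (Sym2 V)) with hG0
  haveI : Fintype G0.ConnectedComponent := Fintype.ofFinite _
  classical
  have hout : ∀ v : V, G0.Reachable (G0.connectedComponentMk v).out v :=
    fun v => ConnectedComponent.eq.mp ((G0.connectedComponentMk v).out_eq)
  have h1 : numComponents B = Fintype.card G0.ConnectedComponent := Nat.card_eq_fintype_card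
  have h2 : tcount S B = (Finset.univ.filter (fun c : G0.ConnectedComponent => c.out ∉ S)).card := by
    rw [tcount, Nat.card_eq_fintype_card, Fintype.card_subtype]
  have h3 : (Finset.univ.filter (fun c : G0.ConnectedComponent => c.out ∈ S)).card = S.card := by
    apply Finset.card_bij' (fun c _ => c.out) (fun v _ => G0.connectedComponentMk v)
    · intro c hc; exact (Finset.mem_filter.1 hc).2
    · intro v hv
      simp only [Finset.mem_filter, Finset.mem_univ, true_and]
      have := isolated hB hv (hout v).symm
      rw [← this]; exact hv
    · intro c _; exact c.out_eq
    · intro v hv; exact (isolated hB hv (hout v).symm).symm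
  have h4 := Finset.card_filter_add_card_filter_not
      (s := (Finset.univ : Finset G0.ConnectedComponent))
      (p := fun c => c.out ∈ S)
  rw [h1, h2, Fintype.card, ← h4, h3]

/-- tcount only depends on the part of A inside Sᶜ, when S is compatible -/
lemma tcount_filter {S : Finset V} {A : Finset (Sym2 V)} (hc : compat S A) :
    tcount S A = tcount S (A.filter (within Sᶜ)) := by
  classical
  set B := A.filter (within Sᶜ) with hB
  have hBw : ∀ e ∈ B, within Sᶜ e := fun e he => (Finset.mem_filter.1 he).2
  have hcB : compat S B := fun e he => Or.inr (hBw e he)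
  set GA := SimpleGraph.fromEdgeSet (↑A : Set (Sym2 V)) with hGA
  set GB := SimpleGraph.fromEdgeSet (↑B : Set (Sym2 V)) with hGB
  have hle : GB ≤ GA := SimpleGraph.fromEdgeSet_mono (Finset.coe_subset.2 (by rw [hB]; exact Finset.filter_subset _ _))
  have houtA : ∀ v : V, GA.Reachable (GA.connectedComponentMk v).out v :=
    fun v => ConnectedComponent.eq.mp ((GA.connectedComponentMk v).out_eq)
  have houtB : ∀ v : V, GB.Reachable (GB.connectedComponentMk v).out v :=
    fun v => ConnectedComponent.eq.mp ((GB.connectedComponentMk v).out_eq)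
  set φ : GB.ConnectedComponent → GA.ConnectedComponent :=
    SimpleGraph.ConnectedComponent.map (SimpleGraph.Hom.ofLE hle) with hφ
  have hφ_mk : ∀ v : V, φ (GB.connectedComponentMk v) = GA.connectedComponentMk v :=
    fun v => ConnectedComponent.map_mk _ _
  have hwd : ∀ c : GB.ConnectedComponent, c.out ∉ S → (φ c).out ∉ S := by
    intro c hcout
    have h1 : φ c = GA.connectedComponentMk c.out := by
      conv_lhs => rw [← mk_out c]
      exact hφ_mk _
    rw [h1]
    intro hmem
    exact hcout ((reachable_side hc (houtA c.out)).1 hmem)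
  refine (Nat.card_congr (Equiv.ofBijective
    (fun c : {c : GB.ConnectedComponent // c.out ∉ S} => (⟨φ c.1, hwd c.1 c.2⟩ :
      {c : GA.ConnectedComponent // c.out ∉ S})) ⟨?_, ?_⟩)).symm
  · rintro ⟨c₁, h₁⟩ ⟨c₂, h₂⟩ h
    simp only [Subtype.mk_eq_mk] at h ⊢
    have hu₁ : c₁.out ∉ S := h₁
    have hreachA : GA.Reachable c₁.out c₂.out := by
      have : GA.connectedComponentMk c₁.out = GA.connectedComponentMk c₂.out := by
        rw [← hφ_mk, ← hφ_mk, mk_out, mk_out]; exact h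
      exact ConnectedComponent.eq.mp this
    have hreachB : GB.Reachable c₁.out c₂.out := by
      have := reach_filter hc hu₁ hreachA
      rwa [← hB] at this
    rw [← mk_out c₁, ← mk_out c₂]
    exact ConnectedComponent.sound hreachB
  · rintro ⟨c, hcout⟩
    refine ⟨⟨GB.connectedComponentMk c.out, ?_⟩, ?_⟩
    · intro hmem
      have hr : GA.Reachable (GB.connectedComponentMk c.out).out c.out :=
        (houtB c.out).mono hle
      exact hcout ((reachable_side hc hr).1 hmem)
    · apply Subtype.ext
      simp only
      rw [hφ_mk]
      exact mk_out c

/-- key identity: q^{#components} = sum over compatible S of (q-1)^{tcount} -/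
lemma key_identity (A : Finset (Sym2 V)) (q : ℝ) :
    q ^ numComponents A =
      ∑ S ∈ Finset.univ.filter (fun S : Finset V => compat S A), (q - 1) ^ tcount S A := by
  classical
  set GA := SimpleGraph.fromEdgeSet (↑A : Set (Sym2 V)) with hGA
  haveI : Fintype GA.ConnectedComponent := Fintype.ofFinite _
  have hout : ∀ v : V, GA.Reachable (GA.connectedComponentMk v).out v :=
    fun v => ConnectedComponent.eq.mp ((GA.connectedComponentMk v).out_eq)
  have hsame : ∀ {x y : V}, s(x,y) ∈ A → GA.connectedComponentMk x = GA.connectedComponentMk y := by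
    intro x y he
    by_cases hxy : x = y
    · rw [hxy]
    · have hadj : GA.Adj x y := by
        rw [hGA, SimpleGraph.fromEdgeSet_adj]
        exact ⟨by exact_mod_cast he, hxy⟩
      exact ConnectedComponent.eq.mpr hadj.reachable
  rw [show (∑ S ∈ Finset.univ.filter (fun S : Finset V => compat S A), (q - 1) ^ tcount S A)
      = ∑ T ∈ (Finset.univ : Finset (GA.ConnectedComponent)).powerset, (q - 1) ^ T.card from ?_]
  · rw [sum_pow_powerset, add_sub_cancel]
    congr 1
    rw [Finset.card_univ, numComponents, ← hGA, Nat.card_eq_fintype_card]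
  · apply Finset.sum_nbij' (i := fun S => Finset.univ.filter (fun c : GA.ConnectedComponent => c.out ∉ S))
      (j := fun T => Finset.univ.filter (fun v : V => GA.connectedComponentMk v ∉ T))
    · intro S _; exact Finset.mem_powerset.2 (Finset.filter_subset _ _)
    · intro T _
      simp only [Finset.mem_filter, Finset.mem_univ, true_and]
      intro e he
      revert he
      induction e using Sym2.ind with
      | _ x y =>
        intro he
        have hxy := hsame he
        by_cases hx : GA.connectedComponentMk x ∈ T
        · right
          intro v hv
          rcases Sym2.mem_iff.1 hv with rfl | rfl
          · simp [hx]
          · simp [← hxy, hx]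
        · left
          intro v hv
          rcases Sym2.mem_iff.1 hv with rfl | rfl
          · simp [hx]
          · simp [← hxy, hx]
    · intro S hS
      have hc : compat S A := (Finset.mem_filter.1 hS).2
      ext v
      simp only [Finset.mem_filter, Finset.mem_univ, true_and, not_not]
      exact reachable_side hc (hout v)
    · intro T _
      ext c
      simp only [Finset.mem_filter, Finset.mem_univ, true_and, not_not]
      rw [mk_out]
    · intro S _
      congr 1
      rw [tcount, Nat.card_eq_fintype_card, Fintype.card_subtype]
/-- reachability decomposition after adding one edge s(x,y) -/
lemma reach_insert {A : Finset (Sym2 V)} {x y u v : V}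
    (h : (SimpleGraph.fromEdgeSet (↑(insert s(x,y) A) : Set (Sym2 V))).Reachable u v) :
    (SimpleGraph.fromEdgeSet (↑A : Set (Sym2 V))).Reachable u v ∨
    ((SimpleGraph.fromEdgeSet (↑A : Set (Sym2 V))).Reachable u x ∧
     (SimpleGraph.fromEdgeSet (↑A : Set (Sym2 V))).Reachable y v) ∨
    ((SimpleGraph.fromEdgeSet (↑A : Set (Sym2 V))).Reachable u y ∧
     (SimpleGraph.fromEdgeSet (↑A : Set (Sym2 V))).Reachable x v) := by
  set G0 := SimpleGraph.fromEdgeSet (↑A : Set (Sym2 V)) with hG0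
  obtain ⟨p⟩ := h
  induction p with
  | nil => exact Or.inl (Reachable.refl _)
  | @cons a b c ha p ih =>
    have hab : G0.Adj a b ∨ (s(a,b) = s(x,y) ∧ a ≠ b) := by
      rw [SimpleGraph.fromEdgeSet_adj] at ha
      obtain ⟨hm, hne⟩ := ha
      rw [Finset.coe_insert, Set.mem_insert_iff] at hm
      rcases hm with h1 | h2
      · exact Or.inr ⟨h1, hne⟩
      · exact Or.inl (by rw [hG0, SimpleGraph.fromEdgeSet_adj]; exact ⟨h2, hne⟩)
    rcases hab with hab | ⟨heq, hne⟩
    · rcases ih with h1 | ⟨h1, h2⟩ | ⟨h1, h2⟩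
      · exact Or.inl (Reachable.trans ⟨hab.toWalk⟩ h1)
      · exact Or.inr (Or.inl ⟨Reachable.trans ⟨hab.toWalk⟩ h1, h2⟩)
      · exact Or.inr (Or.inr ⟨Reachable.trans ⟨hab.toWalk⟩ h1, h2⟩)
    · rw [Sym2.eq_iff] at heq
      rcases heq with ⟨rfl, rfl⟩ | ⟨rfl, rfl⟩
      · -- a = x, b = y
        rcases ih with h1 | ⟨h1, h2⟩ | ⟨h1, h2⟩
        · exact Or.inr (Or.inl ⟨Reachable.refl _, h1⟩)
        · -- y ~ x, y ~ c ... h1 : Reach y x, h2 : Reach y c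
          exact Or.inl (Reachable.trans h1.symm h2)
        · -- h1 : Reach y y, h2 : Reach x c
          exact Or.inl h2
      · -- a = y, b = x
        rcases ih with h1 | ⟨h1, h2⟩ | ⟨h1, h2⟩
        · exact Or.inr (Or.inr ⟨Reachable.refl _, h1⟩)
        ·
          exact Or.inl h2
        · exact Or.inl (Reachable.trans h1.symm h2)

lemma numComponents_le_insert (A : Finset (Sym2 V)) (e : Sym2 V) :
    numComponents A ≤ numComponents (insert e A) + 1 := by
  induction e using Sym2.ind with
  | _ x y =>
  set G0 := SimpleGraph.fromEdgeSet (↑A : Set (Sym2 V)) with hG0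
  set G1 := SimpleGraph.fromEdgeSet (↑(insert s(x,y) A) : Set (Sym2 V)) with hG1
  have hle : G0 ≤ G1 := SimpleGraph.fromEdgeSet_mono (by simp)
  set φ : G0.ConnectedComponent → G1.ConnectedComponent :=
    SimpleGraph.ConnectedComponent.map (SimpleGraph.Hom.ofLE hle) with hφ
  have hφ_mk : ∀ v : V, φ (G0.connectedComponentMk v) = G1.connectedComponentMk v :=
    fun v => ConnectedComponent.map_mk _ _
  have key : ∀ c₁ c₂ : G0.ConnectedComponent, φ c₁ = φ c₂ → c₁ ≠ c₂ →
      c₁ = G0.connectedComponentMk x ∨ c₂ = G0.connectedComponentMk x := by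
    intro c₁ c₂ hphi hne
    obtain ⟨u, rfl⟩ := Quot.exists_rep c₁
    obtain ⟨v, rfl⟩ := Quot.exists_rep c₂
    have h2 : G1.connectedComponentMk u = G1.connectedComponentMk v := by
      rw [← hφ_mk u, ← hφ_mk v]; exact hphi
    have h1 : G1.Reachable u v := ConnectedComponent.eq.mp h2
    rcases reach_insert h1 with h | ⟨ha, hb⟩ | ⟨ha, hb⟩
    · exact absurd (Quot.sound h) hne
    · left; exact (ConnectedComponent.eq.mpr ha : G0.connectedComponentMk u = _)
    · right; exact (ConnectedComponent.eq.mpr hb.symm : G0.connectedComponentMk v = _)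
  -- injectivity on the complement of {mk x}
  have hinj : Function.Injective
      (fun c : {c : G0.ConnectedComponent // c ≠ G0.connectedComponentMk x} => φ c.1) := by
    rintro ⟨c₁, h₁⟩ ⟨c₂, h₂⟩ h
    by_contra hne
    simp only [Subtype.mk_eq_mk] at hne
    rcases key c₁ c₂ h hne with h' | h'
    · exact h₁ h'
    · exact h₂ h'
  have h2 : Nat.card {c : G0.ConnectedComponent // c ≠ G0.connectedComponentMk x} ≤
      Nat.card G1.ConnectedComponent := Nat.card_le_card_of_injective _ hinj
  have h3 : Nat.card G0.ConnectedComponent ≤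
      Nat.card {c : G0.ConnectedComponent // c ≠ G0.connectedComponentMk x} + 1 := by
    haveI : Fintype G0.ConnectedComponent := Fintype.ofFinite _
    classical
    rw [Nat.card_eq_fintype_card, Nat.card_eq_fintype_card, Fintype.card_subtype]
    have := Finset.card_filter_add_card_filter_not
      (s := (Finset.univ : Finset G0.ConnectedComponent))
      (p := fun c => c ≠ G0.connectedComponentMk x)
    simp only [not_not] at this
    rw [Fintype.card, ← this]
    have h4 : (Finset.univ.filter (fun c => c = G0.connectedComponentMk x)).card ≤ 1 := by
      apply Finset.card_le_one.2
      intro a ha b hb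
      simp only [Finset.mem_filter] at ha hb
      rw [ha.2, hb.2]
    omega
  calc numComponents A = Nat.card G0.ConnectedComponent := rfl
    _ ≤ _ + 1 := h3
    _ ≤ Nat.card G1.ConnectedComponent + 1 := by omega

lemma card_le_numComponents_add (A : Finset (Sym2 V)) :
    Fintype.card V ≤ numComponents A + A.card := by
  induction A using Finset.induction with
  | empty =>
    have : numComponents (∅ : Finset (Sym2 V)) = Fintype.card V := by
      unfold numComponents
      rw [Finset.coe_empty, SimpleGraph.fromEdgeSet_empty]
      have : Function.Bijective ((⊥ : SimpleGraph V).connectedComponentMk) := by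
        constructor
        · intro a b h
          rw [ConnectedComponent.eq, SimpleGraph.reachable_bot] at h
          exact h
        · exact Quot.exists_rep
      rw [Nat.card_congr (Equiv.ofBijective _ this).symm, Nat.card_eq_fintype_card]
    simp [this]
  | @insert e A he ih =>
    have h1 := numComponents_le_insert A e
    rw [Finset.card_insert_of_notMem he]
    omega


lemma within_not_both {S : Finset V} {e : Sym2 V} (h1 : within S e) (h2 : within Sᶜ e) :
    False := by
  induction e using Sym2.ind with
  | _ x y =>
    have hx := h1 x (Sym2.mem_mk_left x y)
    have hx' := h2 x (Sym2.mem_mk_left x y)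
    simp at hx'
    exact hx' hx

lemma filter_within_card (G : SimpleGraph V) [DecidableRel G.Adj] (S : Finset V) :
    (G.edgeFinset.filter (within S)).card = inducedEdgeCount G S := by
  rw [inducedEdgeCount]
  congr 1

lemma rc_master (G : SimpleGraph V) [DecidableRel G.Adj] (q w : ℝ) :
    rcPartition G q w = ∑ S : Finset V, (1 + w) ^ inducedEdgeCount G S *
      ∑ B ∈ (G.edgeFinset.filter (within Sᶜ)).powerset, w ^ B.card * (q - 1) ^ tcount S B := by
  classical
  rw [rcPartition]
  have step1 : ∀ A ∈ G.edgeFinset.powerset, q ^ numComponents A * w ^ A.card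
      = ∑ S : Finset V, ite (compat S A) ((q - 1) ^ tcount S A * w ^ A.card) 0 := by
    intro A _
    rw [key_identity A q, Finset.sum_mul, ← Finset.sum_filter]
  rw [Finset.sum_congr rfl step1, Finset.sum_comm]
  apply Finset.sum_congr rfl
  intro S _
  rw [← Finset.sum_filter]
  set E1 := G.edgeFinset.filter (within S) with hE1
  set E2 := G.edgeFinset.filter (within Sᶜ) with hE2
  have hsplit : ∑ A ∈ G.edgeFinset.powerset.filter (fun A => compat S A),
        (q - 1) ^ tcount S A * w ^ A.card
      = ∑ p ∈ E1.powerset ×ˢ E2.powerset,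
        w ^ p.1.card * (w ^ p.2.card * (q - 1) ^ tcount S p.2) := by
    apply Finset.sum_nbij' (i := fun A => (A.filter (within S), A.filter (within Sᶜ)))
      (j := fun p => p.1 ∪ p.2)
    · intro A hA
      obtain ⟨hA1, hA2⟩ := Finset.mem_filter.1 hA
      have hsub := Finset.mem_powerset.1 hA1
      rw [Finset.mem_product]
      exact ⟨Finset.mem_powerset.2 (Finset.filter_subset_filter _ hsub),
        Finset.mem_powerset.2 (Finset.filter_subset_filter _ hsub)⟩
    · intro p hp
      rw [Finset.mem_product] at hp
      have h1 := Finset.mem_powerset.1 hp.1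
      have h2 := Finset.mem_powerset.1 hp.2
      rw [Finset.mem_filter, Finset.mem_powerset]
      constructor
      · intro e he
        rcases Finset.mem_union.1 he with h | h
        · exact (Finset.mem_filter.1 (h1 h)).1
        · exact (Finset.mem_filter.1 (h2 h)).1
      · intro e he
        rcases Finset.mem_union.1 he with h | h
        · exact Or.inl (Finset.mem_filter.1 (h1 h)).2
        · exact Or.inr (Finset.mem_filter.1 (h2 h)).2
    · intro A hA
      have hc : compat S A := (Finset.mem_filter.1 hA).2
      simp only
      ext e
      simp only [Finset.mem_union, Finset.mem_filter]
      constructor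
      · rintro (⟨h, -⟩ | ⟨h, -⟩) <;> exact h
      · intro he
        rcases hc e he with h | h
        · exact Or.inl ⟨he, h⟩
        · exact Or.inr ⟨he, h⟩
    · intro p hp
      rw [Finset.mem_product] at hp
      have h1 := Finset.mem_powerset.1 hp.1
      have h2 := Finset.mem_powerset.1 hp.2
      have hp1 : ∀ e ∈ p.1, within S e := fun e he => (Finset.mem_filter.1 (h1 he)).2
      have hp2 : ∀ e ∈ p.2, within Sᶜ e := fun e he => (Finset.mem_filter.1 (h2 he)).2
      have e1 : (p.1 ∪ p.2).filter (within S) = p.1 := by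
        ext e
        simp only [Finset.mem_filter, Finset.mem_union]
        constructor
        · rintro ⟨h | h, hw⟩
          · exact h
          · exact (within_not_both hw (hp2 e h)).elim
        · intro h; exact ⟨Or.inl h, hp1 e h⟩
      have e2 : (p.1 ∪ p.2).filter (within Sᶜ) = p.2 := by
        ext e
        simp only [Finset.mem_filter, Finset.mem_union]
        constructor
        · rintro ⟨h | h, hw⟩
          · exact (within_not_both (hp1 e h) hw).elim
          · exact h
        · intro h; exact ⟨Or.inr h, hp2 e h⟩
      rw [Prod.ext_iff]
      exact ⟨e1, e2⟩
    · intro A hA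
      have hc : compat S A := (Finset.mem_filter.1 hA).2
      have hdisj : Disjoint (A.filter (within S)) (A.filter (within Sᶜ)) := by
        rw [Finset.disjoint_left]
        intro e he1 he2
        exact within_not_both (Finset.mem_filter.1 he1).2 (Finset.mem_filter.1 he2).2
      have hunion : A.filter (within S) ∪ A.filter (within Sᶜ) = A := by
        ext e
        simp only [Finset.mem_union, Finset.mem_filter]
        constructor
        · rintro (⟨h, -⟩ | ⟨h, -⟩) <;> exact h
        · intro he
          rcases hc e he with h | h
          · exact Or.inl ⟨he, h⟩
          · exact Or.inr ⟨he, h⟩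
      have hcard : A.card = (A.filter (within S)).card + (A.filter (within Sᶜ)).card := by
        rw [← Finset.card_union_of_disjoint hdisj, hunion]
      rw [tcount_filter hc, hcard, pow_add]
      ring
  rw [hsplit, Finset.sum_product]
  have : ∀ a ∈ E1.powerset, (∑ b ∈ E2.powerset,
      w ^ a.card * (w ^ b.card * (q - 1) ^ tcount S b))
      = w ^ a.card * ∑ b ∈ E2.powerset, w ^ b.card * (q - 1) ^ tcount S b := by
    intro a _; rw [Finset.mul_sum]
  rw [Finset.sum_congr rfl this, ← Finset.sum_mul, sum_pow_powerset, hE1, filter_within_card]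

lemma term_ineq {a w : ℝ} (hw : 0 ≤ w) (ha : 0 < a) {n t m : ℕ} (h : n ≤ t + m) :
    (1 ≤ a → a ^ n * (w / a) ^ m ≤ w ^ m * a ^ t) ∧
    (a ≤ 1 → w ^ m * a ^ t ≤ a ^ n * (w / a) ^ m) := by
  have hkey : a ^ n * (w / a) ^ m = w ^ m * a ^ n / a ^ m := by
    rw [div_pow]; ring
  have hpos : (0:ℝ) < a ^ m := pow_pos ha m
  constructor
  · intro h1
    rw [hkey, div_le_iff₀ hpos, mul_assoc, ← pow_add]
    exact mul_le_mul_of_nonneg_left (pow_le_pow_right₀ h1 h) (pow_nonneg hw m)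
  · intro h1
    rw [hkey, le_div_iff₀ hpos, mul_assoc, ← pow_add]
    exact mul_le_mul_of_nonneg_left (pow_le_pow_of_le_one ha.le h1 h) (pow_nonneg hw m)

lemma inner_exponent {G : SimpleGraph V} [DecidableRel G.Adj] {S : Finset V}
    {B : Finset (Sym2 V)} (hB : B ∈ (G.edgeFinset.filter (within Sᶜ)).powerset) :
    Fintype.card V - S.card ≤ tcount S B + B.card := by
  have hsub := Finset.mem_powerset.1 hB
  have hw : ∀ e ∈ B, within Sᶜ e := fun e he => (Finset.mem_filter.1 (hsub he)).2
  have h5 : numComponents B = S.card + tcount S B := numComponents_eq_card_add_tcount hw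
  have h6 : Fintype.card V ≤ numComponents B + B.card := card_le_numComponents_add B
  omega

lemma rank2_master (G : SimpleGraph V) [DecidableRel G.Adj] (q w : ℝ) :
    rcRank2 G q w = ∑ S : Finset V, (1 + w) ^ inducedEdgeCount G S *
      ∑ B ∈ (G.edgeFinset.filter (within Sᶜ)).powerset,
        (q - 1) ^ (Fintype.card V - S.card) * (w / (q - 1)) ^ B.card := by
  rw [rcRank2]
  apply Finset.sum_congr rfl
  intro S _
  rw [mul_assoc]
  congr 1
  rw [← filter_within_card G Sᶜ, ← sum_pow_powerset, Finset.mul_sum]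

end AuxRC

theorem stmt_3 {V : Type*} [Fintype V] [DecidableEq V]
    (G : SimpleGraph V) [DecidableRel G.Adj] (q w : ℝ) (hw : 0 ≤ w) :
    (2 ≤ q → rcRank2 G q w ≤ rcPartition G q w) ∧
    (1 < q → q ≤ 2 → rcPartition G q w ≤ rcRank2 G q w) := by
  classical
  have h1w : (0:ℝ) ≤ 1 + w := by linarith
  constructor
  · intro hq
    have ha : (0:ℝ) < q - 1 := by linarith
    rw [rc_master G q w, rank2_master G q w]
    apply Finset.sum_le_sum
    intro S _
    apply mul_le_mul_of_nonneg_left _ (pow_nonneg h1w _)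
    apply Finset.sum_le_sum
    intro B hB
    exact (term_ineq hw ha (inner_exponent hB)).1 (by linarith)
  · intro hq1 hq2
    have ha : (0:ℝ) < q - 1 := by linarith
    rw [rc_master G q w, rank2_master G q w]
    apply Finset.sum_le_sum
    intro S _
    apply mul_le_mul_of_nonneg_left _ (pow_nonneg h1w _)
    apply Finset.sum_le_sum
    intro B hB
    exact (term_ineq hw ha (inner_exponent hB)).2 (by linarith)
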